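/- arXiv:math/0702240 — 3 statements merged into one kernel-verified Lean document; each statement's English description precedes it below -/
import Mathlib

section
/- Let R be a valuation ring with residue field k and fraction field F. Suppose A is an R-algebra that is free of finite rank as an R-module, and A ⊗_R k is a division algebra. Then A ⊗_R F is also a division algebra. -/
open scoped TensorProduct
set_option maxHeartbeats 1000000
set_option linter.unnecessarySimpa false

set_option linter.unusedSectionVars false

section AuxStmt0

variable {R : Type*} [CommRing R] [IsDomain R]
variable {A : Type*} [Ring A] [Algebra R A]
variable {ι : Type*} [Fintype ι]

section
variable {S : Type*} [CommRing S] [Algebra R S]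

lemma aux_coord (b : Module.Basis ι R A) (a : A) (i : ι) :
    ((b.baseChange S).repr (1 ⊗ₜ[R] a)) i = algebraMap R S (b.repr a i) := by
  rw [Module.Basis.baseChange_repr_tmul, Algebra.algebraMap_eq_smul_one]

lemma aux_ne_zero (b : Module.Basis ι R A) {a : A} {i : ι}
    (h : algebraMap R S (b.repr a i) ≠ 0) : (1 ⊗ₜ[R] a : S ⊗[R] A) ≠ 0 := by
  intro h0
  apply h
  rw [← aux_coord b a i, h0, map_zero, Finsupp.zero_apply]

lemma aux_eq_zero (hinj : Function.Injective (algebraMap R S))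
    (b : Module.Basis ι R A) {a : A} (h : (1 ⊗ₜ[R] a : S ⊗[R] A) = 0) : a = 0 := by
  apply b.repr.injective
  ext i
  simp only [map_zero, Finsupp.zero_apply]
  apply hinj
  rw [← aux_coord (S := S) b a i, h, map_zero, Finsupp.zero_apply, map_zero]

end

lemma aux_dvd_min [ValuationRing R] (c : ι → R) (s : Finset ι) (hs : s.Nonempty) :
    ∃ i ∈ s, ∀ j ∈ s, c i ∣ c j := by
  classical
  induction s using Finset.induction_on with
  | empty => exact absurd hs (by simp)
  | @insert a s hnotmem ih =>
    rcases s.eq_empty_or_nonempty with rfl | hne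
    · exact ⟨a, by simp⟩
    · obtain ⟨i, hi, hmin⟩ := ih hne
      rcases ValuationRing.dvd_total (c a) (c i) with h | h
      · exact ⟨a, Finset.mem_insert_self _ _, fun j hj => by
          rcases Finset.mem_insert.mp hj with rfl | hj
          · exact dvd_rfl
          · exact h.trans (hmin j hj)⟩
      · exact ⟨i, Finset.mem_insert_of_mem hi, fun j hj => by
          rcases Finset.mem_insert.mp hj with rfl | hj
          · exact h
          · exact hmin j hj⟩

lemma aux_content [ValuationRing R] (b : Module.Basis ι R A) {a : A} (ha : a ≠ 0) :
    ∃ (r : R) (a' : A) (i : ι), r ≠ 0 ∧ a = r • a' ∧ b.repr a' i = 1 := by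
  have hex : ∃ j, b.repr a j ≠ 0 := by
    by_contra h
    push_neg at h
    exact ha (b.repr.injective (by ext j; simp [h j]))
  obtain ⟨j, hj⟩ := hex
  obtain ⟨i, -, hmin⟩ := aux_dvd_min (fun i => b.repr a i) Finset.univ ⟨j, Finset.mem_univ j⟩
  have hi0 : b.repr a i ≠ 0 := by
    intro h
    obtain ⟨u, hu⟩ := hmin j (Finset.mem_univ j)
    exact hj (by rw [hu, h, zero_mul])
  choose u hu using fun j => hmin j (Finset.mem_univ j)
  have hui : u i = 1 := mul_left_cancel₀ hi0 (by rw [← hu i, mul_one])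
  refine ⟨b.repr a i, ∑ j, u j • b j, i, hi0, ?_, ?_⟩
  · conv_lhs => rw [← b.sum_repr a]
    rw [Finset.smul_sum]
    congr 1
    ext j
    rw [smul_smul, ← hu j]
  · rw [congrFun (b.repr_sum_self u) i, hui]

section
variable {F : Type*} [Field F] [Algebra R F] [IsFractionRing R F]

lemma aux_smul_tmul (t : R) (a : A) :
    algebraMap R F t • (1 ⊗ₜ[R] a : F ⊗[R] A) = 1 ⊗ₜ[R] (t • a) := by
  rw [TensorProduct.smul_tmul', smul_eq_mul, mul_one, Algebra.algebraMap_eq_smul_one,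
    TensorProduct.smul_tmul]

lemma aux_denom (x : F ⊗[R] A) :
    ∃ (s : R) (a : A), s ≠ 0 ∧ algebraMap R F s • x = 1 ⊗ₜ[R] a := by
  induction x with
  | zero => exact ⟨1, 0, one_ne_zero, by simp⟩
  | tmul f a =>
    obtain ⟨⟨r, s⟩, hs⟩ := IsLocalization.surj (nonZeroDivisors R) f
    refine ⟨s, r • a, nonZeroDivisors.coe_ne_zero s, ?_⟩
    rw [TensorProduct.smul_tmul', smul_eq_mul, mul_comm, hs, Algebra.algebraMap_eq_smul_one,
      TensorProduct.smul_tmul]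
  | add x y hx hy =>
    obtain ⟨s, a, hs, ha⟩ := hx
    obtain ⟨t, c, ht, hc⟩ := hy
    refine ⟨s * t, t • a + s • c, mul_ne_zero hs ht, ?_⟩
    have h1 : algebraMap R F (s * t) • x = 1 ⊗ₜ[R] (t • a) := by
      rw [map_mul, mul_comm, mul_smul, ha, aux_smul_tmul]
    have h2 : algebraMap R F (s * t) • y = 1 ⊗ₜ[R] (s • c) := by
      rw [map_mul, mul_smul, hc, aux_smul_tmul]
    rw [smul_add, h1, h2, ← TensorProduct.tmul_add]

end

end AuxStmt0

/-- Let `R` be a valuation ring with residue field `k` and fraction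
field `F`.  If `A` is an `R`-algebra, free of finite rank as an `R`-module, such that
`A ⊗[R] k` is a division algebra, then `A ⊗[R] F` is a division algebra. -/
theorem stmt0 (R : Type*) [CommRing R] [IsDomain R] [ValuationRing R]
    (A : Type*) [Ring A] [Algebra R A] [Module.Free R A] [Module.Finite R A]
    [Nontrivial (A ⊗[R] IsLocalRing.ResidueField R)]
    (hdiv : ∀ x : A ⊗[R] IsLocalRing.ResidueField R, x ≠ 0 → IsUnit x) :
    Nontrivial (A ⊗[R] FractionRing R) ∧
      ∀ x : A ⊗[R] FractionRing R, x ≠ 0 → IsUnit x := by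
  classical
  set k := IsLocalRing.ResidueField R with hk
  set F := FractionRing R with hF
  let b := Module.Free.chooseBasis R A
  have hinjF : Function.Injective (algebraMap R F) := IsFractionRing.injective R F
  -- division transported to k ⊗ A
  have hdiv' : ∀ z : k ⊗[R] A, z ≠ 0 → IsUnit z := by
    intro z hz
    have hz' : (Algebra.TensorProduct.comm R k A) z ≠ 0 := by
      intro h
      apply hz
      have := congrArg (Algebra.TensorProduct.comm R k A).symm h
      simpa using this
    have := hdiv _ hz'
    have := this.map (Algebra.TensorProduct.comm R k A).symm.toRingHom
    simpa using this
  -- (1 : A) ≠ 0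
  have h1A : (1 : A) ≠ 0 := by
    intro h
    apply (one_ne_zero : (1 : A ⊗[R] k) ≠ 0)
    rw [Algebra.TensorProduct.one_def, h, TensorProduct.zero_tmul]
  -- nonzero elements of A stay nonzero in F ⊗ A
  have hAF : ∀ {a : A}, (1 ⊗ₜ[R] a : F ⊗[R] A) = 0 → a = 0 :=
    fun h => aux_eq_zero hinjF b h
  -- scaling: every nonzero element of F ⊗ A is a scalar multiple of a "unimodular" 1 ⊗ a'
  have key : ∀ x : F ⊗[R] A, x ≠ 0 → ∃ (c : F) (a' : A), c ≠ 0 ∧ x = c • (1 ⊗ₜ[R] a') ∧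
      (1 ⊗ₜ[R] a' : k ⊗[R] A) ≠ 0 := by
    intro x hx
    obtain ⟨s, a, hs, hsa⟩ := aux_denom x
    have hsF : algebraMap R F s ≠ 0 := fun h => hs (hinjF (by rw [h, map_zero]))
    have ha : a ≠ 0 := by
      intro h
      rw [h, TensorProduct.tmul_zero] at hsa
      exact hx ((smul_eq_zero_iff_eq <| Units.mk0 _ hsF).mp hsa)
    obtain ⟨r, a', i, hr, hra, hrepr⟩ := aux_content b ha
    refine ⟨(algebraMap R F s)⁻¹ * algebraMap R F r, a', ?_, ?_, ?_⟩
    · exact mul_ne_zero (inv_ne_zero hsF) fun h => hr (hinjF (by rw [h, map_zero]))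
    · rw [mul_smul, aux_smul_tmul, ← hra, ← hsa, inv_smul_smul₀ hsF]
    · apply aux_ne_zero b (i := i)
      rw [hrepr, map_one]
      exact one_ne_zero
  -- no zero divisors in F ⊗ A
  haveI : NoZeroDivisors (F ⊗[R] A) := by
    constructor
    intro x y hxy
    by_contra hne
    push_neg at hne
    obtain ⟨hx, hy⟩ := hne
    obtain ⟨c, a', hc, hxc, hak⟩ := key x hx
    obtain ⟨d, b', hd, hyd, hbk⟩ := key y hy
    have : (c * d) • (1 ⊗ₜ[R] (a' * b') : F ⊗[R] A) = 0 := by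
      rw [← hxy, hxc, hyd, smul_mul_assoc, mul_smul_comm, smul_smul,
        Algebra.TensorProduct.tmul_mul_tmul, one_mul]
    have hab : a' * b' = 0 := by
      rcases smul_eq_zero.mp this with h | h
      · exact absurd h (mul_ne_zero hc hd)
      · exact hAF h
    have : (1 ⊗ₜ[R] a' : k ⊗[R] A) * (1 ⊗ₜ[R] b') = 0 := by
      rw [Algebra.TensorProduct.tmul_mul_tmul, hab, TensorProduct.tmul_zero]
    obtain ⟨u, hu⟩ := hdiv' _ hak
    apply hbk
    calc (1 ⊗ₜ[R] b' : k ⊗[R] A) = ↑u⁻¹ * (↑u * 1 ⊗ₜ[R] b') := by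
          rw [← mul_assoc, Units.inv_mul, one_mul]
      _ = 0 := by rw [hu, this, mul_zero]
  -- nontriviality of F ⊗ A
  have h1F : (1 : F ⊗[R] A) ≠ 0 := by
    rw [Algebra.TensorProduct.one_def]
    exact fun h => h1A (hAF h)
  haveI : Nontrivial (F ⊗[R] A) := nontrivial_of_ne 1 0 h1F
  haveI : IsDomain (F ⊗[R] A) := NoZeroDivisors.to_isDomain _
  -- conclude
  constructor
  · refine nontrivial_of_ne 1 0 fun h => h1F ?_
    have := congrArg (Algebra.TensorProduct.comm R A F) h
    simpa using this
  · intro x hx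
    have hx' : (Algebra.TensorProduct.comm R A F) x ≠ 0 := by
      intro h
      apply hx
      have := congrArg (Algebra.TensorProduct.comm R A F).symm h
      simpa using this
    have hu : IsUnit ((Algebra.TensorProduct.comm R A F) x) :=
      (IsIntegral.of_finite F _).isUnit hx'
    have := hu.map (Algebra.TensorProduct.comm R A F).symm.toRingHom
    simpa using this
end

section
/- Let ℓ be a prime and L a field such that X^ℓ - B is irreducible over L for some B ∈ L×. Suppose X, Y ∈ GL_ℓ(L) commute, Y^ℓ = B·I, and X^ℓ = I. Then X is a scalar matrix λ·I with λ^ℓ = 1, λ ∈ L. -/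
open Polynomial Module

set_option maxHeartbeats 1000000 in
/-- Let `ℓ` be a prime and `L` a field with `X ^ ℓ - B` irreducible for
some `B ∈ L×`.  If `X, Y ∈ GL_ℓ(L)` commute, `Y ^ ℓ = B·1` and `X ^ ℓ = 1`, then `X` is a
scalar matrix `λ·1` with `λ ^ ℓ = 1`, `λ ∈ L`. -/
theorem stmt8 (L : Type*) [Field L] (ℓ : ℕ) (hℓ : ℓ.Prime) (B : L) (hB : B ≠ 0)
    (hirr : Irreducible (Polynomial.X ^ ℓ - Polynomial.C B))
    (X Y : Matrix (Fin ℓ) (Fin ℓ) L) (hXu : IsUnit X) (hYu : IsUnit Y)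
    (hcomm : X * Y = Y * X)
    (hY : Y ^ ℓ = B • (1 : Matrix (Fin ℓ) (Fin ℓ) L)) (hX : X ^ ℓ = 1) :
    ∃ lam : L, lam ^ ℓ = 1 ∧ X = lam • (1 : Matrix (Fin ℓ) (Fin ℓ) L) := by
  classical
  have hℓ2 : 2 ≤ ℓ := hℓ.two_le
  have hℓ0 : ℓ ≠ 0 := hℓ.ne_zero
  set f : L[X] := Polynomial.X ^ ℓ - Polynomial.C B with hf
  have hfmonic : f.Monic := monic_X_pow_sub_C B hℓ0
  have hfdeg : f.natDegree = ℓ := natDegree_X_pow_sub_C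
  haveI : Fact (Irreducible f) := ⟨hirr⟩
  set K := AdjoinRoot f with hK
  -- the algebra map K → M_ℓ(L) sending the root to Y
  have haev : (Polynomial.aeval Y) f = 0 := by
    simp only [hf, map_sub, map_pow, aeval_X, aeval_C, hY]
    rw [Algebra.algebraMap_eq_smul_one, sub_self]
  have hspan : ∀ p ∈ Ideal.span {f}, (Polynomial.aeval Y) p = 0 := by
    intro p hp
    obtain ⟨q, rfl⟩ := (Ideal.mem_span_singleton).mp hp
    rw [_root_.map_mul, haev, zero_mul]
  set φ : K →ₐ[L] Matrix (Fin ℓ) (Fin ℓ) L :=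
    Ideal.Quotient.liftₐ (Ideal.span {f}) (Polynomial.aeval Y) hspan with hφ
  have hφmk : ∀ p : L[X], φ (AdjoinRoot.mk f p) = (Polynomial.aeval Y) p := by
    intro p
    rfl
  -- X commutes with everything in the range of φ
  have hcomm' : ∀ p : L[X], X * (Polynomial.aeval Y) p = (Polynomial.aeval Y) p * X := by
    intro p
    induction p using Polynomial.induction_on' with
    | add p q hp hq => simp [map_add, add_mul, mul_add, hp, hq]
    | monomial n a =>
      have h1 : Commute X ((algebraMap L (Matrix (Fin ℓ) (Fin ℓ) L)) a) :=
        (Algebra.commutes a X).symm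
      have h2 : Commute X (Y ^ n) := (Commute.pow_right hcomm n)
      have := h1.mul_right h2
      simpa [aeval_monomial] using this.eq
  have hcommφ : ∀ k : K, X * φ k = φ k * X := by
    intro k
    induction k using AdjoinRoot.induction_on with
    | ih p => rw [hφmk]; exact hcomm' p
  -- dimension facts
  have hfne : f ≠ 0 := hfmonic.ne_zero
  haveI : FiniteDimensional L K := (AdjoinRoot.powerBasis hfne).finite
  have hKrank : finrank L K = ℓ := by
    rw [(AdjoinRoot.powerBasis hfne).finrank, AdjoinRoot.powerBasis_dim]
    exact hfdeg
  -- cyclic vector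
  set v : Fin ℓ → L := Pi.single ⟨0, by omega⟩ 1 with hv
  have hvne : v ≠ 0 := by
    intro h
    have := congrFun h ⟨0, by omega⟩
    simp [hv] at this
  set ψ : K →ₗ[L] (Fin ℓ → L) :=
    { toFun := fun k => (φ k).mulVec v
      map_add' := fun a b => by simp [_root_.map_add, Matrix.add_mulVec]
      map_smul' := fun c a => by simp [_root_.map_smul, Matrix.smul_mulVec] } with hψ
  have hψinj : Function.Injective ψ := by
    rw [← LinearMap.ker_eq_bot, Submodule.eq_bot_iff]
    intro k hk
    by_contra hne
    have hk0 : (φ k).mulVec v = 0 := hk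
    have : v = 0 := by
      have h1 : (φ k⁻¹).mulVec ((φ k).mulVec v) = v := by
        rw [Matrix.mulVec_mulVec, ← _root_.map_mul, inv_mul_cancel₀ hne, _root_.map_one, Matrix.one_mulVec]
      rw [hk0, Matrix.mulVec_zero] at h1
      exact h1.symm
    exact hvne this
  have hψsurj : Function.Surjective ψ := by
    have hrk : finrank L K = finrank L (Fin ℓ → L) := by
      rw [hKrank, Module.finrank_fin_fun]
    exact (LinearMap.injective_iff_surjective_of_finrank_eq_finrank hrk).mp hψinj
  obtain ⟨k0, hk0⟩ := hψsurj (X.mulVec v)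
  -- X = φ k0
  have hXeq : X = φ k0 := by
    have hmv : ∀ w : Fin ℓ → L, X.mulVec w = (φ k0).mulVec w := by
      intro w
      obtain ⟨k, hk⟩ := hψsurj w
      have hk' : (φ k).mulVec v = w := hk
      calc X.mulVec w = X.mulVec ((φ k).mulVec v) := by rw [hk']
        _ = (X * φ k).mulVec v := by rw [Matrix.mulVec_mulVec]
        _ = (φ k * X).mulVec v := by rw [hcommφ]
        _ = (φ k).mulVec (X.mulVec v) := by rw [Matrix.mulVec_mulVec]
        _ = (φ k).mulVec ((φ k0).mulVec v) := by rw [show X.mulVec v = (φ k0).mulVec v from hk0.symm]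
        _ = (φ (k * k0)).mulVec v := by rw [Matrix.mulVec_mulVec, ← _root_.map_mul]
        _ = (φ (k0 * k)).mulVec v := by rw [mul_comm]
        _ = (φ k0).mulVec ((φ k).mulVec v) := by rw [_root_.map_mul, ← Matrix.mulVec_mulVec]
        _ = (φ k0).mulVec w := by rw [hk']
    ext i j
    have := congrFun (hmv (Pi.single j 1)) i
    simpa [Matrix.mulVec_single] using this
  -- φ is injective; k0 ^ ℓ = 1
  have hφinj : Function.Injective φ := by
    haveI : NeZero ℓ := ⟨hℓ0⟩
    haveI : Nontrivial (Matrix (Fin ℓ) (Fin ℓ) L) := Matrix.nonempty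
    exact φ.toRingHom.injective
  have hk0pow : k0 ^ ℓ = 1 := by
    apply hφinj
    rw [map_pow, _root_.map_one, ← hXeq, hX]
  -- k0 lies in L
  have hint : IsIntegral L k0 := IsIntegral.of_finite L k0
  have hdvd : (minpoly L k0).natDegree ∣ ℓ := by
    have := minpoly.degree_dvd hint
    rwa [hKrank] at this
  have hdvdpoly : minpoly L k0 ∣ Polynomial.X ^ ℓ - 1 := by
    apply minpoly.dvd
    simp [hk0pow]
  rcases hℓ.eq_one_or_self_of_dvd _ hdvd with hdeg1 | hdegℓ
  · obtain ⟨lam, hlam⟩ := (minpoly.natDegree_eq_one_iff).mp hdeg1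
    refine ⟨lam, ?_, ?_⟩
    · have : (algebraMap L K) (lam ^ ℓ) = (algebraMap L K) 1 := by
        rw [map_pow, hlam, hk0pow, _root_.map_one]
      exact (algebraMap L K).injective this
    · rw [hXeq, ← hlam, φ.commutes, Algebra.algebraMap_eq_smul_one]
  · -- impossible: minpoly would be X^ℓ - 1 which is reducible
    exfalso
    have hm1 : (Polynomial.X ^ ℓ - 1 : L[X]).Monic := by
      have := monic_X_pow_sub_C (1 : L) hℓ0
      simpa using this
    have heq : Polynomial.X ^ ℓ - 1 = minpoly L k0 := by
      apply Polynomial.eq_of_monic_of_dvd_of_natDegree_le (minpoly.monic hint) hm1 hdvdpoly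
      rw [hdegℓ]
      have : (Polynomial.X ^ ℓ - 1 : L[X]).natDegree = ℓ := by
        have := natDegree_X_pow_sub_C (n := ℓ) (r := (1 : L))
        simpa using this
      rw [this]
    have hroot : (Polynomial.X ^ ℓ - 1 : L[X]).IsRoot 1 := by
      simp [Polynomial.IsRoot]
    have hmirr : Irreducible (minpoly L k0) := minpoly.irreducible hint
    rw [← heq] at hmirr
    have := Polynomial.degree_eq_one_of_irreducible_of_root hmirr hroot
    have hnd : (Polynomial.X ^ ℓ - 1 : L[X]).natDegree = ℓ := by
      have := natDegree_X_pow_sub_C (n := ℓ) (r := (1 : L))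
      simpa using this
    have : (Polynomial.X ^ ℓ - 1 : L[X]).natDegree = 1 := natDegree_eq_of_degree_eq_some this
    omega
end

section
/- Let k be an infinite field and ℓ ≥ 2. The set of pairs (A, B) ∈ M_ℓ(k) × M_ℓ(k) such that the matrix A fails to be invertible and additionally Tr(adj(A)·B) = 0 is contained in a Zariski-closed subset of codimension at least 2 in M_ℓ(k) × M_ℓ(k); equivalently, the vanishing locus of the two polynomials det(A) and Tr(adj(A)B) on M_ℓ(k)² is a proper closed subset cut out by two algebraically independent polynomials. -/
open MvPolynomial

private lemma aux16_degreeOf_eq_zero_iff {R : Type*} [CommSemiring R] {σ : Type*}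
    (v : σ) (p : MvPolynomial σ R) : degreeOf v p = 0 ↔ v ∉ p.vars := by
  classical
  rw [degreeOf_def, vars_def, Multiset.mem_toFinset, ← Multiset.count_eq_zero]

private lemma aux16_degreeOf_le_of_dvd {K : Type*} [Field K] {σ : Type*} [Fintype σ]
    (v : σ) {p q : MvPolynomial σ K} (h : p ∣ q) (hq : q ≠ 0) :
    degreeOf v p ≤ degreeOf v q := by
  classical
  obtain ⟨m, hm⟩ : ∃ m, Fintype.card σ = m + 1 := by
    have : 0 < Fintype.card σ := Fintype.card_pos_iff.2 ⟨v⟩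
    exact ⟨Fintype.card σ - 1, by omega⟩
  let e0 := Fintype.equivFinOfCardEq hm
  let e : σ ≃ Fin (m + 1) := e0.trans (Equiv.swap (e0 v) 0)
  have hev : e v = 0 := by simp [e, Equiv.swap_apply_left]
  have hp : degreeOf v p = degreeOf 0 (rename e p) := by
    rw [← hev, degreeOf_rename_of_injective e.injective]
  have hq' : degreeOf v q = degreeOf 0 (rename e q) := by
    rw [← hev, degreeOf_rename_of_injective e.injective]
  rw [hp, hq', ← natDegree_finSuccEquiv, ← natDegree_finSuccEquiv]
  apply Polynomial.natDegree_le_of_dvd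
  · exact map_dvd (finSuccEquiv K m) (map_dvd (rename (e : σ → Fin (m+1))) h)
  · simp only [ne_eq, EmbeddingLike.map_eq_zero_iff]
    intro hc
    exact hq ((rename_injective _ e.injective) (by simpa using hc))

private lemma aux16_notMem_vars_of_dvd {K : Type*} [Field K] {σ : Type*} [Fintype σ]
    {v : σ} {p q : MvPolynomial σ K} (h : p ∣ q) (hq : q ≠ 0) (hv : v ∉ q.vars) :
    v ∉ p.vars := by
  rw [← aux16_degreeOf_eq_zero_iff] at hv ⊢
  have := aux16_degreeOf_le_of_dvd v h hq
  omega

private lemma aux16_notMem_vars_det {R : Type*} [CommRing R] {σ τ n : Type*}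
    [DecidableEq n] [Fintype n]
    (f : τ → σ) (N : Matrix n n (MvPolynomial τ R)) {v : σ} (hv : v ∉ Set.range f) :
    v ∉ ((N.map (rename f)).det).vars := by
  classical
  have hdet : (N.map (rename f)).det = rename f N.det :=
    ((rename f : MvPolynomial τ R →ₐ[R] MvPolynomial σ R).toRingHom.map_det N).symm
  rw [hdet]
  intro hmem
  obtain ⟨u, _, rfl⟩ := mem_vars_rename f _ hmem
  exact hv ⟨u, rfl⟩


/-- For `ℓ ≥ 2` and an infinite field `k`, the polynomials
`det A` and `Tr(adj(A)·B)` in the `2ℓ²` coordinates of a pair of generic `ℓ × ℓ`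
matrices `(A, B)` have no common non-unit factor; hence their common vanishing locus
has codimension at least `2` in `M_ℓ(k) × M_ℓ(k)`. -/
theorem stmt16 (k : Type*) [Field k] [Infinite k] (ℓ : ℕ) (hℓ : 2 ≤ ℓ) :
    let R := MvPolynomial ((Fin ℓ × Fin ℓ) ⊕ (Fin ℓ × Fin ℓ)) k
    let A : Matrix (Fin ℓ) (Fin ℓ) R := fun i j => MvPolynomial.X (Sum.inl (i, j))
    let B : Matrix (Fin ℓ) (Fin ℓ) R := fun i j => MvPolynomial.X (Sum.inr (i, j))
    ∀ r : R, r ∣ A.det → r ∣ (A.adjugate * B).trace → IsUnit r := by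
  intro R A B r hrdet hrtr
  classical
  have hℓ0 : 0 < ℓ := by omega
  set σ := (Fin ℓ × Fin ℓ) ⊕ (Fin ℓ × Fin ℓ) with hσ
  -- `det A ≠ 0`: evaluate at the identity matrix
  have hdet0 : A.det ≠ 0 := by
    intro hc
    have h1 : (MvPolynomial.eval (fun u : σ => match u with
        | Sum.inl (a, b) => if a = b then (1 : k) else 0
        | Sum.inr _ => 0)) A.det = 1 := by
      rw [RingHom.map_det, RingHom.mapMatrix_apply]
      have : A.map (MvPolynomial.eval (fun u : σ => match u with
          | Sum.inl (a, b) => if a = b then (1 : k) else 0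
          | Sum.inr _ => 0)) = (1 : Matrix (Fin ℓ) (Fin ℓ) k) := by
        ext a b
        rw [Matrix.map_apply]
        simp [A, Matrix.map_apply, Matrix.one_apply]
      rw [this, Matrix.det_one]
    rw [hc, map_zero] at h1
    exact zero_ne_one h1
  have hr0 : r ≠ 0 := by
    rintro rfl
    exact hdet0 (zero_dvd_iff.mp hrdet)
  -- variables of `det A` are all of the form `inl _`
  have hdet_vars : ∀ w : Fin ℓ × Fin ℓ, Sum.inr w ∉ A.det.vars := by
    intro w
    have hA : A = (Matrix.of (fun a b : Fin ℓ =>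
        (X (a, b) : MvPolynomial (Fin ℓ × Fin ℓ) k))).map (rename Sum.inl) := by
      ext a b
      simp [A, Matrix.map_apply]
    rw [hA]
    exact aux16_notMem_vars_det Sum.inl _ (by simp)
  -- hence `r` involves no `inr` variable
  have hr_inr : ∀ w : Fin ℓ × Fin ℓ, Sum.inr w ∉ r.vars := fun w =>
    aux16_notMem_vars_of_dvd hrdet hdet0 (hdet_vars w)
  -- extraction: `r` divides every entry of the adjugate
  have hadj_dvd : ∀ i j : Fin ℓ, r ∣ A.adjugate j i := by
    intro i j
    set g : σ → R := fun u => match u with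
      | Sum.inl u => X (Sum.inl u)
      | Sum.inr u => if u = (i, j) then 1 else 0 with hg
    have hfix : aeval g r = r := by
      conv_rhs => rw [← aeval_X_left_apply r]
      apply eval₂Hom_congr' rfl _ rfl
      intro u hu _
      match u with
      | Sum.inl u => rfl
      | Sum.inr u => exact absurd hu (hr_inr u)
    have hdvd := map_dvd (aeval g) hrtr
    rw [hfix] at hdvd
    have hAfix : A.map (aeval g) = A := by
      ext a b : 1
      rw [Matrix.map_apply]
      simp [A, Matrix.map_apply, hg]
    have hBE : B.map (aeval g) = Matrix.of (fun a b : Fin ℓ =>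
        if (a, b) = (i, j) then (1 : R) else 0) := by
      ext a b : 1
      rw [Matrix.map_apply]
      simp [B, Matrix.map_apply, hg]
    have htr_eval : aeval g (A.adjugate * B).trace = A.adjugate j i := by
      have h1 : aeval g (A.adjugate * B).trace
          = ((A.adjugate * B).map (aeval g)).trace := by
        simp [Matrix.trace, Matrix.diag, map_sum, Matrix.map_apply]
      have hadjfix : A.adjugate.map (aeval g) = A.adjugate := by
        rw [← AlgHom.mapMatrix_apply, AlgHom.map_adjugate, AlgHom.mapMatrix_apply, hAfix]
      have h2 : (A.adjugate * B).map (aeval g)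
          = A.adjugate * (B.map (aeval g)) := by
        rw [← AlgHom.mapMatrix_apply, map_mul, AlgHom.mapMatrix_apply,
          AlgHom.mapMatrix_apply, hadjfix]
      rw [h1, h2, hBE]
      simp only [Matrix.trace, Matrix.diag, Matrix.mul_apply, Matrix.of_apply,
        Prod.mk.injEq, mul_ite, mul_one, mul_zero, ite_and]
      rw [Finset.sum_comm]
      simp [Finset.sum_ite_eq, Finset.sum_ite_eq']
    rwa [htr_eval] at hdvd
  -- the `(j, i)` entry of the adjugate does not involve the variable `inl (i, j)`
  have hadj_vars : ∀ i j : Fin ℓ, Sum.inl (i, j) ∉ (A.adjugate j i).vars := by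
    intro i j
    rw [Matrix.adjugate_apply]
    set τ := {u : σ // u ≠ Sum.inl (i, j)} with hτ
    have hM : A.updateRow i (Pi.single j 1)
        = (Matrix.of (fun a b : Fin ℓ =>
            if h : a = i then (if b = j then (1 : MvPolynomial τ k) else 0)
            else X (⟨Sum.inl (a, b), fun hc => h (by
              injection hc with h2
              exact congrArg Prod.fst h2)⟩ : τ))).map (rename Subtype.val) := by
      ext a b
      by_cases ha : a = i
      · subst ha
        by_cases hb : b = j <;>
          simp [Matrix.updateRow_apply, Pi.single_apply, hb, Matrix.map_apply]
      · rw [Matrix.updateRow_apply, if_neg ha]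
        simp [Matrix.updateRow_apply, ha, Matrix.map_apply, A]
    rw [hM]
    apply aux16_notMem_vars_det
    rintro ⟨u, hu⟩
    exact u.2 hu
  -- the `(j, i)` entry of the adjugate is nonzero: evaluate at a transposition matrix
  have hadj_ne : ∀ i j : Fin ℓ, A.adjugate j i ≠ 0 := by
    intro i j hc
    set x1 : σ → k := fun u => match u with
      | Sum.inl (a, b) => if b = Equiv.swap i j a then 1 else 0
      | Sum.inr _ => 0 with hx1
    have hmap : A.map (MvPolynomial.eval x1) = (Equiv.swap i j).permMatrix k := by
      ext a b
      rw [Matrix.map_apply]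
      simp [A, Matrix.map_apply, hx1, Equiv.Perm.permMatrix, PEquiv.toMatrix_apply,
        Equiv.toPEquiv_apply, eq_comm]
    have h1 : (MvPolynomial.eval x1) (A.adjugate j i)
        = ((Equiv.swap i j).permMatrix k).adjugate j i := by
      rw [← hmap, ← RingHom.mapMatrix_apply, ← RingHom.map_adjugate,
        RingHom.mapMatrix_apply]
      rfl
    have h2 : ((Equiv.swap i j).permMatrix k).adjugate j i
        = ((Equiv.swap i j).permMatrix k).det := by
      rw [Matrix.adjugate_apply]
      congr 1
      have : Pi.single j (1 : k) = ((Equiv.swap i j).permMatrix k) i := by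
        ext b
        simp [Pi.single_apply, Equiv.Perm.permMatrix, PEquiv.toMatrix_apply,
          Equiv.toPEquiv_apply, Equiv.swap_apply_left, eq_comm]
      rw [this, Matrix.updateRow_eq_self]
    have h3 : ((Equiv.swap i j).permMatrix k).det ≠ 0 := by
      rw [Matrix.det_permutation]
      rcases Int.units_eq_one_or (Equiv.Perm.sign (Equiv.swap i j)) with h | h <;>
        simp [h]
    rw [hc, map_zero] at h1
    exact h3 (by rw [← h2, ← h1])
  -- every variable has degree `0` in `r`
  have hkey : ∀ v : σ, v ∉ r.vars := by
    rintro (⟨i, j⟩ | w)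
    · exact aux16_notMem_vars_of_dvd (hadj_dvd i j) (hadj_ne i j) (hadj_vars i j)
    · exact hr_inr w
  -- hence `r` is a nonzero constant
  obtain ⟨q, hq⟩ := exists_rename_eq_of_vars_subset_range r (Empty.elim)
    (Function.injective_of_subsingleton _)
    (by intro v hv; exact absurd (Finset.mem_coe.mp hv) (hkey v))
  rw [eq_C_of_isEmpty q] at hq
  rw [← hq, rename_C] at hr0 ⊢
  have hc0 : coeff 0 q ≠ 0 := fun h => hr0 (by rw [h, map_zero])
  exact (isUnit_iff_ne_zero.mpr hc0).map (C : k →+* R)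
end
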